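/- Let m > 1 be an odd integer divisible by 3, and let E_m be the elliptic curve over ℚ defined by y² = x³ - x + m⁶. Then the three rational points P = (0, m³), Q = (-1, m³), and R = (-m², m) on E_m are linearly independent over ℤ in the Mordell–Weil group E_m(ℚ); in particular, the rank of E_m(ℚ) is at least 3. -/

import Mathlib

/-- The elliptic curve `E_m : y² = x³ - x + m⁶` over `ℚ`. -/
def Em (m : ℤ) : WeierstrassCurve ℚ := ⟨0, 0, 0, -1, (m : ℚ) ^ 6⟩


section IntLemmas

private lemma zmod3_aux : ∀ x y : ZMod 3, x ^ 2 + y ^ 2 = 0 → x = 0 ∧ y = 0 := by decide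

lemma step3 (u d e : ℤ) (hu : u % 3 = 1) (h : (3 : ℤ) ∣ e ^ 2 + u * d ^ 2) :
    3 ∣ e ∧ 3 ∣ d := by
  have hu' : u = 3 * (u / 3) + 1 := by omega
  have h8 : ((e : ZMod 3)) ^ 2 + (d : ZMod 3) ^ 2 = 0 := by
    have := (ZMod.intCast_zmod_eq_zero_iff_dvd _ 3).2 h
    push_cast at this
    rw [hu'] at this
    push_cast at this
    rw [show (3 : ZMod 3) = 0 from rfl] at this
    linear_combination this
  obtain ⟨h1, h2⟩ := zmod3_aux _ _ h8
  exact ⟨(ZMod.intCast_zmod_eq_zero_iff_dvd _ 3).1 h1,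
    (ZMod.intCast_zmod_eq_zero_iff_dvd _ 3).1 h2⟩

lemma desc3 (u d e : ℤ) (hu : u % 3 = 1) (h : (3 ^ 6 : ℤ) ∣ e ^ 2 + u * d ^ 2) :
    27 ∣ e ∧ 27 ∣ d := by
  obtain ⟨he1, hd1⟩ := step3 u d e hu (dvd_trans (by norm_num) h)
  obtain ⟨e1, rfl⟩ := he1
  obtain ⟨d1, rfl⟩ := hd1
  have h2 : (3 ^ 4 : ℤ) ∣ e1 ^ 2 + u * d1 ^ 2 := by
    rcases h with ⟨k, hk⟩
    exact ⟨k, by linarith [hk]⟩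
  obtain ⟨he2, hd2⟩ := step3 u d1 e1 hu (dvd_trans (by norm_num) h2)
  obtain ⟨e2, rfl⟩ := he2
  obtain ⟨d2, rfl⟩ := hd2
  have h3 : (3 ^ 2 : ℤ) ∣ e2 ^ 2 + u * d2 ^ 2 := by
    rcases h2 with ⟨k, hk⟩
    exact ⟨k, by linarith [hk]⟩
  obtain ⟨he3, hd3⟩ := step3 u d2 e2 hu (dvd_trans (by norm_num) h3)
  obtain ⟨e3, rfl⟩ := he3
  obtain ⟨d3, rfl⟩ := hd3
  exact ⟨⟨e3, by ring⟩, ⟨d3, by ring⟩⟩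

lemma sq27 (e : ℤ) (h : (3 ^ 6 : ℤ) ∣ e ^ 2) : 27 ∣ e := by
  rw [show ((3:ℤ) ^ 6) = 27 ^ 2 by norm_num] at h
  exact (Int.pow_dvd_pow_iff two_ne_zero).1 h

lemma dvd_sq_of_27 (d : ℤ) (h : (27 : ℤ) ∣ d) : (3 ^ 6 : ℤ) ∣ d ^ 2 := by
  obtain ⟨k, rfl⟩ := h
  exact ⟨k ^ 2, by ring⟩

end IntLemmas

section Descent

lemma descent_int (k : ℤ) (hk : 2 ≤ k) (Pred : ℤ → ℤ → ℤ → ℤ → Prop)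
    (hstep : ∀ a b c d, Pred a b c d → k ∣ a ∧ k ∣ b ∧ k ∣ c ∧ k ∣ d)
    (hdiv : ∀ a b c d, Pred (k * a) (k * b) (k * c) (k * d) → Pred a b c d) :
    ∀ a b c d, Pred a b c d → d = 0 := by
  have main : ∀ n : ℕ, ∀ a b c d, d.natAbs ≤ n → Pred a b c d → d = 0 := by
    intro n
    induction n with
    | zero => intro a b c d hd _; omega
    | succ n ih =>
      intro a b c d hd hp
      obtain ⟨⟨a', rfl⟩, ⟨b', rfl⟩, ⟨c', rfl⟩, ⟨d', rfl⟩⟩ := hstep _ _ _ _ hp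
      have hp' := hdiv _ _ _ _ hp
      rcases eq_or_ne d' 0 with rfl | hd0
      · simp
      · have h1 : (k * d').natAbs = k.natAbs * d'.natAbs := Int.natAbs_mul k d'
        have h2 : 2 ≤ k.natAbs := by omega
        have h3 : 1 ≤ d'.natAbs := by omega
        have : d'.natAbs ≤ n := by nlinarith [h1, h2, h3]
        rw [ih _ _ _ _ this hp', mul_zero]
  exact fun a b c d => main d.natAbs a b c d le_rfl

variable (m : ℤ)

lemma hM36 (h3 : 3 ∣ m) : (3 ^ 6 : ℤ) ∣ m ^ 6 := by
  obtain ⟨t, rfl⟩ := h3; exact ⟨t ^ 6, by ring⟩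

/-- case A : η = -θ, coords (0, -1, 0) -/
lemma caseA_step (h3 : 3 ∣ m) (a b c d : ℤ)
    (E0 : a ^ 2 - 2 * b * c * m ^ 6 = 0)
    (E1 : 2 * a * b + 2 * b * c - c ^ 2 * m ^ 6 = -d ^ 2)
    (E2 : b ^ 2 + 2 * a * c + c ^ 2 = 0) :
    3 ∣ a ∧ 3 ∣ b ∧ 3 ∣ c ∧ 3 ∣ d := by
  have hM := hM36 m h3
  have k1 : (a + b + c) ^ 2 + 1 * d ^ 2 = m ^ 6 * (c * (2 * b + c)) := by
    linear_combination E0 + E1 + E2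
  obtain ⟨hep, hd⟩ := desc3 1 d (a + b + c) (by decide) (by rw [k1]; exact hM.mul_right _)
  have ha : 27 ∣ a := sq27 a (by
    rw [show a ^ 2 = m ^ 6 * (2 * (b * c)) by linear_combination E0]
    exact hM.mul_right _)
  have hem : 27 ∣ (a - b + c) := sq27 _ (by
    rw [show (a - b + c) ^ 2 = d ^ 2 - m ^ 6 * (c * (c - 2 * b)) by
      linear_combination E0 - E1 + E2]
    exact dvd_sub (dvd_sq_of_27 d hd) (hM.mul_right _))
  refine ⟨?_, ?_, ?_, ?_⟩ <;> omega

/-- case B : η = -1-θ, coords (-1, -1, 0) -/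
lemma caseB_step (h3 : 3 ∣ m) (a b c d : ℤ)
    (E0 : a ^ 2 - 2 * b * c * m ^ 6 = -d ^ 2)
    (E1 : 2 * a * b + 2 * b * c - c ^ 2 * m ^ 6 = -d ^ 2)
    (E2 : b ^ 2 + 2 * a * c + c ^ 2 = 0) :
    3 ∣ a ∧ 3 ∣ b ∧ 3 ∣ c ∧ 3 ∣ d := by
  have hM := hM36 m h3
  have k1 : a ^ 2 + 1 * d ^ 2 = m ^ 6 * (2 * (b * c)) := by linear_combination E0
  obtain ⟨ha, hd⟩ := desc3 1 d a (by decide) (by rw [k1]; exact hM.mul_right _)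
  have hep : 27 ∣ (a + b + c) := sq27 _ (by
    rw [show (a + b + c) ^ 2 = -2 * d ^ 2 + m ^ 6 * (c * (2 * b + c)) by
      linear_combination E0 + E1 + E2]
    exact dvd_add ((dvd_sq_of_27 d hd).mul_left (-2)) (hM.mul_right _))
  have hem : 27 ∣ (a - b + c) := sq27 _ (by
    rw [show (a - b + c) ^ 2 = -(m ^ 6 * (c * (c - 2 * b))) by
      linear_combination E0 - E1 + E2]
    exact (hM.mul_right _).neg_right)
  refine ⟨?_, ?_, ?_, ?_⟩ <;> omega

/-- case C : η = -m²-θ, coords (-m², -1, 0) -/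
lemma caseC_step (h3 : 3 ∣ m) (a b c d : ℤ)
    (E0 : a ^ 2 - 2 * b * c * m ^ 6 = -d ^ 2 * m ^ 2)
    (E1 : 2 * a * b + 2 * b * c - c ^ 2 * m ^ 6 = -d ^ 2)
    (E2 : b ^ 2 + 2 * a * c + c ^ 2 = 0) :
    3 ∣ a ∧ 3 ∣ b ∧ 3 ∣ c ∧ 3 ∣ d := by
  have hM := hM36 m h3
  obtain ⟨t, ht⟩ := h3
  have hu : (1 + m ^ 2) % 3 = 1 := by
    have : 1 + m ^ 2 = 3 * (3 * t ^ 2) + 1 := by rw [ht]; ring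
    omega
  have k1 : (a + b + c) ^ 2 + (1 + m ^ 2) * d ^ 2 = m ^ 6 * (c * (2 * b + c)) := by
    linear_combination E0 + E1 + E2
  obtain ⟨hep, hd⟩ := desc3 _ d (a + b + c) hu (by rw [k1]; exact hM.mul_right _)
  have ha : 27 ∣ a := sq27 a (by
    rw [show a ^ 2 = -(d ^ 2 * m ^ 2) + m ^ 6 * (2 * (b * c)) by linear_combination E0]
    exact dvd_add ((dvd_sq_of_27 d hd).mul_right _).neg_right (hM.mul_right _))
  have hem : 27 ∣ (a - b + c) := sq27 _ (by
    rw [show (a - b + c) ^ 2 = d ^ 2 * (1 - m ^ 2) - m ^ 6 * (c * (c - 2 * b)) by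
      linear_combination E0 - E1 + E2]
    exact dvd_sub ((dvd_sq_of_27 d hd).mul_right _) (hM.mul_right _))
  refine ⟨?_, ?_, ?_, ?_⟩ <;> omega

/-- case AB : η = θ+θ², coords (0, 1, 1) -/
lemma caseAB_step (h3 : 3 ∣ m) (a b c d : ℤ)
    (E0 : a ^ 2 - 2 * b * c * m ^ 6 = 0)
    (E1 : 2 * a * b + 2 * b * c - c ^ 2 * m ^ 6 = d ^ 2)
    (E2 : b ^ 2 + 2 * a * c + c ^ 2 = d ^ 2) :
    3 ∣ a ∧ 3 ∣ b ∧ 3 ∣ c ∧ 3 ∣ d := by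
  have hM := hM36 m h3
  have k1 : (a + b + c) ^ 2 + (-2) * d ^ 2 = m ^ 6 * (c * (2 * b + c)) := by
    linear_combination E0 + E1 + E2
  obtain ⟨hep, hd⟩ := desc3 (-2) d (a + b + c) (by decide) (by rw [k1]; exact hM.mul_right _)
  have ha : 27 ∣ a := sq27 a (by
    rw [show a ^ 2 = m ^ 6 * (2 * (b * c)) by linear_combination E0]
    exact hM.mul_right _)
  have hem : 27 ∣ (a - b + c) := sq27 _ (by
    rw [show (a - b + c) ^ 2 = -(m ^ 6 * (c * (c - 2 * b))) by
      linear_combination E0 - E1 + E2]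
    exact (hM.mul_right _).neg_right)
  refine ⟨?_, ?_, ?_, ?_⟩ <;> omega

/-- case BC : η = (1+θ)(m²+θ), coords (m², 1+m², 1) -/
lemma caseBC_step (h3 : 3 ∣ m) (a b c d : ℤ)
    (E0 : a ^ 2 - 2 * b * c * m ^ 6 = d ^ 2 * m ^ 2)
    (E1 : 2 * a * b + 2 * b * c - c ^ 2 * m ^ 6 = d ^ 2 * (1 + m ^ 2))
    (E2 : b ^ 2 + 2 * a * c + c ^ 2 = d ^ 2) :
    3 ∣ a ∧ 3 ∣ b ∧ 3 ∣ c ∧ 3 ∣ d := by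
  have hM := hM36 m h3
  obtain ⟨t, ht⟩ := h3
  have hu : (-2 - 2 * m ^ 2) % 3 = 1 := by
    have : -2 - 2 * m ^ 2 = 3 * (-1 - 6 * t ^ 2) + 1 := by rw [ht]; ring
    omega
  have k1 : (a + b + c) ^ 2 + (-2 - 2 * m ^ 2) * d ^ 2 = m ^ 6 * (c * (2 * b + c)) := by
    linear_combination E0 + E1 + E2
  obtain ⟨hep, hd⟩ := desc3 _ d (a + b + c) hu (by rw [k1]; exact hM.mul_right _)
  have ha : 27 ∣ a := sq27 a (by
    rw [show a ^ 2 = d ^ 2 * m ^ 2 + m ^ 6 * (2 * (b * c)) by linear_combination E0]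
    exact dvd_add ((dvd_sq_of_27 d hd).mul_right _) (hM.mul_right _))
  have hem : 27 ∣ (a - b + c) := sq27 _ (by
    rw [show (a - b + c) ^ 2 = -(m ^ 6 * (c * (c - 2 * b))) by
      linear_combination E0 - E1 + E2]
    exact (hM.mul_right _).neg_right)
  refine ⟨?_, ?_, ?_, ?_⟩ <;> omega

/-- case ABC : η = -θ(1+θ)(m²+θ), coords (m⁶, -1-m², -1-m²) -/
lemma caseABC_step (h3 : 3 ∣ m) (hm0 : m ≠ 0) (a b c d : ℤ)
    (E0 : a ^ 2 - 2 * b * c * m ^ 6 = d ^ 2 * m ^ 6)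
    (E1 : 2 * a * b + 2 * b * c - c ^ 2 * m ^ 6 = d ^ 2 * (-1 - m ^ 2))
    (E2 : b ^ 2 + 2 * a * c + c ^ 2 = d ^ 2 * (-1 - m ^ 2)) :
    3 ∣ a ∧ 3 ∣ b ∧ 3 ∣ c ∧ 3 ∣ d := by
  have hM := hM36 m h3
  obtain ⟨t, ht⟩ := h3
  have keyE : (a + b * m ^ 6 + c * m ^ 12) ^ 2 =
      (m ^ 4) ^ 2 * (-(d ^ 2 * (1 + m ^ 4 + m ^ 6)) + m ^ 10 * (2 * b * c + c ^ 2 * m ^ 6)) := by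
    linear_combination E0 + m ^ 6 * E1 + m ^ 12 * E2
  obtain ⟨e', he'⟩ : (m ^ 4 : ℤ) ∣ (a + b * m ^ 6 + c * m ^ 12) :=
    (Int.pow_dvd_pow_iff two_ne_zero).1 ⟨_, keyE⟩
  rw [he'] at keyE
  have k0 : e' ^ 2 = -(d ^ 2 * (1 + m ^ 4 + m ^ 6)) + m ^ 10 * (2 * b * c + c ^ 2 * m ^ 6) :=
    mul_left_cancel₀ (pow_ne_zero 8 hm0) (by linear_combination keyE)
  have hu : (1 + m ^ 4 + m ^ 6) % 3 = 1 := by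
    have : 1 + m ^ 4 + m ^ 6 = 3 * (27 * t ^ 4 + 243 * t ^ 6) + 1 := by rw [ht]; ring
    omega
  have k1 : e' ^ 2 + (1 + m ^ 4 + m ^ 6) * d ^ 2 =
      m ^ 10 * (2 * b * c + c ^ 2 * m ^ 6) := by linear_combination k0
  obtain ⟨he, hd⟩ := desc3 _ d e' hu (by
    rw [k1, ht]
    exact ⟨3 ^ 4 * t ^ 10 * (2 * b * c + c ^ 2 * (3 * t) ^ 6), by ring⟩)
  have ha : 27 ∣ a := sq27 a (by
    rw [show a ^ 2 = d ^ 2 * m ^ 6 + m ^ 6 * (2 * (b * c)) by linear_combination E0]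
    exact dvd_add (hM.mul_left _) (hM.mul_right _))
  have hep : 27 ∣ (a + b + c) := sq27 _ (by
    rw [show (a + b + c) ^ 2 =
        d ^ 2 * (m ^ 6 - 2 - 2 * m ^ 2) + m ^ 6 * (c * (2 * b + c)) by
      linear_combination E0 + E1 + E2]
    exact dvd_add ((dvd_sq_of_27 d hd).mul_right _) (hM.mul_right _))
  have hem : 27 ∣ (a - b + c) := sq27 _ (by
    rw [show (a - b + c) ^ 2 = d ^ 2 * m ^ 6 - m ^ 6 * (c * (c - 2 * b)) by
      linear_combination E0 - E1 + E2]
    exact dvd_sub (hM.mul_left _) (hM.mul_right _))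
  refine ⟨?_, ?_, ?_, ?_⟩ <;> omega

private lemma zmod8_aux : ∀ a b c d : ZMod 8, a ^ 2 - 2 * b * c = 0 →
    2 * a * b + 2 * b * c - c ^ 2 = d ^ 2 → b ^ 2 + 2 * a * c + c ^ 2 = d ^ 2 →
    (a = 0 ∨ a = 2 ∨ a = 4 ∨ a = 6) ∧ (b = 0 ∨ b = 2 ∨ b = 4 ∨ b = 6) ∧
    (c = 0 ∨ c = 2 ∨ c = 4 ∨ c = 6) ∧ (d = 0 ∨ d = 2 ∨ d = 4 ∨ d = 6) := by decide

private lemma even_of8 (x : ℤ)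
    (h : (x : ZMod 8) = 0 ∨ (x : ZMod 8) = 2 ∨ (x : ZMod 8) = 4 ∨ (x : ZMod 8) = 6) :
    2 ∣ x := by
  have key : ∀ v : ℤ, (x : ZMod 8) = (v : ZMod 8) → (8:ℤ) ∣ x - v := by
    intro v hv
    refine (ZMod.intCast_zmod_eq_zero_iff_dvd (x - v) 8).1 ?_
    push_cast
    rw [hv]; ring
  rcases h with h | h | h | h
  · have := key 0 (by exact_mod_cast h); omega
  · have := key 2 (by exact_mod_cast h); omega
  · have := key 4 (by exact_mod_cast h); omega
  · have := key 6 (by exact_mod_cast h); omega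

/-- case AC : η = θ(m²+θ), coords (0, m², 1); 2-adic argument -/
lemma caseAC_step (hodd : Odd m) (a b c d : ℤ)
    (E0 : a ^ 2 - 2 * b * c * m ^ 6 = 0)
    (E1 : 2 * a * b + 2 * b * c - c ^ 2 * m ^ 6 = d ^ 2 * m ^ 2)
    (E2 : b ^ 2 + 2 * a * c + c ^ 2 = d ^ 2) :
    2 ∣ a ∧ 2 ∣ b ∧ 2 ∣ c ∧ 2 ∣ d := by
  have hmod : m % 2 = 1 := Int.odd_iff.mp hodd
  have hm8 : m % 8 = 1 ∨ m % 8 = 3 ∨ m % 8 = 5 ∨ m % 8 = 7 := by omega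
  have hcast : ((m : ZMod 8)) = ((m % 8 : ℤ) : ZMod 8) := by
    rw [ZMod.intCast_eq_intCast_iff]
    exact (Int.emod_emod_of_dvd m dvd_rfl).symm
  have hm2 : ((m : ZMod 8)) ^ 2 = 1 := by
    rcases hm8 with h | h | h | h <;> rw [hcast, h] <;> decide
  have hm6 : ((m : ZMod 8)) ^ 6 = 1 := by
    rw [show ((m : ZMod 8)) ^ 6 = (((m : ZMod 8)) ^ 2) ^ 3 by ring, hm2]; norm_num
  have F0 : (a : ZMod 8) ^ 2 - 2 * (b : ZMod 8) * (c : ZMod 8) = 0 := by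
    have : ((a ^ 2 - 2 * b * c * m ^ 6 : ℤ) : ZMod 8) = 0 := by rw [E0]; norm_num
    push_cast at this
    rw [hm6] at this
    linear_combination this
  have F1 : 2 * (a : ZMod 8) * (b : ZMod 8) + 2 * (b : ZMod 8) * (c : ZMod 8)
      - (c : ZMod 8) ^ 2 = (d : ZMod 8) ^ 2 := by
    have : ((2 * a * b + 2 * b * c - c ^ 2 * m ^ 6 : ℤ) : ZMod 8)
        = ((d ^ 2 * m ^ 2 : ℤ) : ZMod 8) := by rw [E1]
    push_cast at this
    rw [hm6, hm2] at this
    linear_combination this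
  have F2 : (b : ZMod 8) ^ 2 + 2 * (a : ZMod 8) * (c : ZMod 8) + (c : ZMod 8) ^ 2
      = (d : ZMod 8) ^ 2 := by
    have : ((b ^ 2 + 2 * a * c + c ^ 2 : ℤ) : ZMod 8) = ((d ^ 2 : ℤ) : ZMod 8) := by rw [E2]
    push_cast at this
    linear_combination this
  obtain ⟨ha, hb, hc, hd⟩ := zmod8_aux _ _ _ _ F0 F1 F2
  exact ⟨even_of8 a ha, even_of8 b hb, even_of8 c hc, even_of8 d hd⟩

end Descent

open Polynomial

noncomputable def fpol (m : ℤ) : ℚ[X] := X ^ 3 - X + C ((m : ℚ) ^ 6)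

lemma fpol_eq (m : ℤ) :
    fpol m = C 1 * X ^ 3 + C 0 * X ^ 2 + C (-1) * X + C ((m : ℚ) ^ 6) := by
  simp [fpol]; ring

lemma fpol_natDegree (m : ℤ) : (fpol m).natDegree = 3 := by
  rw [fpol_eq]; exact natDegree_cubic one_ne_zero

lemma fpol_monic (m : ℤ) : (fpol m).Monic := by
  rw [Monic, fpol_eq, leadingCoeff_cubic one_ne_zero]

lemma fpol_ne_zero (m : ℤ) : fpol m ≠ 0 := (fpol_monic m).ne_zero

lemma no_rat_root (m : ℤ) (hodd : Odd m) : ∀ r : ℚ, r ^ 3 - r + (m : ℚ) ^ 6 ≠ 0 := by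
  intro r h
  have hq0 : ((r.den : ℚ)) ≠ 0 := by exact_mod_cast r.den_nz
  have hr : (r.num : ℚ) = r * r.den := (div_eq_iff hq0).1 (Rat.num_div_den r)
  have key : (r.num : ℚ) ^ 3 - r.num * (r.den : ℚ) ^ 2 + (m : ℚ) ^ 6 * (r.den : ℚ) ^ 3 = 0 := by
    linear_combination (r.den : ℚ) ^ 3 * h +
      ((r.num : ℚ) ^ 2 + r.num * (r * r.den) + (r * r.den) ^ 2 - (r.den : ℚ) ^ 2) * hr
  have keyZ : r.num ^ 3 - r.num * (r.den : ℤ) ^ 2 + m ^ 6 * (r.den : ℤ) ^ 3 = 0 := by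
    exact_mod_cast key
  have hdvd : ((r.den : ℤ)) ∣ r.num ^ 3 :=
    ⟨r.num * r.den - m ^ 6 * (r.den : ℤ) ^ 2, by linear_combination keyZ⟩
  have hdvd' : r.den ∣ r.num.natAbs ^ 3 := by
    have h' := Int.natAbs_dvd_natAbs.mpr hdvd
    rwa [Int.natAbs_natCast, Int.natAbs_pow] at h'
  have hden : r.den = 1 := (Nat.Coprime.pow_right 3 r.reduced.symm).eq_one_of_dvd hdvd'
  rw [hden] at keyZ
  push_cast at keyZ
  -- parity contradiction
  obtain ⟨t, ht⟩ := hodd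
  have h2 : ((r.num : ZMod 2)) ^ 3 - (r.num : ZMod 2) + ((m : ZMod 2)) ^ 6 = 0 := by
    have := congrArg (fun z : ℤ => (z : ZMod 2)) keyZ
    push_cast at this
    linear_combination this
  have hm2 : ((m : ZMod 2)) = 1 := by
    rw [ht]; push_cast
    rw [show ((2 : ZMod 2)) = 0 from rfl]
    ring
  rw [hm2] at h2
  revert h2
  exact fun h2 => (by decide : ∀ x : ZMod 2, ¬(x ^ 3 - x + 1 ^ 6 = 0)) _ h2

lemma fpol_irred (m : ℤ) (hodd : Odd m) : Irreducible (fpol m) := by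
  rw [Polynomial.irreducible_iff_roots_eq_zero_of_degree_le_three
    (by rw [fpol_natDegree]; norm_num) (by rw [fpol_natDegree])]
  rw [Multiset.eq_zero_iff_forall_notMem]
  intro r hr
  rw [mem_roots (fpol_ne_zero m)] at hr
  refine no_rat_root m hodd r ?_
  rwa [IsRoot, fpol, eval_add, eval_sub, eval_pow, eval_X, eval_C] at hr

/-! ### The cubic field -/

section Kfield

variable (m : ℤ)

noncomputable abbrev Kf := AdjoinRoot (fpol m)

noncomputable abbrev θf : Kf m := AdjoinRoot.root (fpol m)

lemma theta_cubed :
    (θf m) ^ 3 = θf m - (algebraMap ℚ (Kf m) ((m : ℚ) ^ 6)) := by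
  have h : AdjoinRoot.mk (fpol m) (X ^ 3 - X + C ((m : ℚ) ^ 6)) = 0 := by
    rw [← fpol]; exact AdjoinRoot.mk_self
  simp only [map_add, map_sub, map_pow, AdjoinRoot.mk_X, AdjoinRoot.mk_C] at h
  rw [AdjoinRoot.algebraMap_eq, map_pow]
  linear_combination h

/-- linear independence of 1, θ, θ² -/
lemma coords_vanish (u v w : ℚ)
    (h : algebraMap ℚ (Kf m) u + algebraMap ℚ (Kf m) v * θf m
      + algebraMap ℚ (Kf m) w * (θf m) ^ 2 = 0) : u = 0 ∧ v = 0 ∧ w = 0 := by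
  have hmk : AdjoinRoot.mk (fpol m) (C u + C v * X + C w * X ^ 2) = 0 := by
    rw [map_add, map_add, map_mul, map_mul, map_pow]
    rw [AdjoinRoot.mk_X, AdjoinRoot.mk_C, AdjoinRoot.mk_C, AdjoinRoot.mk_C]
    exact h
  have hdvd : fpol m ∣ (C u + C v * X + C w * X ^ 2) := by
    rwa [AdjoinRoot.mk_eq_zero] at hmk
  have hdeg : (C u + C v * X + C w * X ^ 2 : ℚ[X]).degree < (fpol m).degree := by
    have h1 : (C u + C v * X + C w * X ^ 2 : ℚ[X]).degree ≤ 2 := by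
      rw [show (C u + C v * X + C w * X ^ 2 : ℚ[X]) = C w * X ^ 2 + C v * X + C u by ring]
      exact degree_quadratic_le
    have h2 : (fpol m).degree = 3 := by
      rw [degree_eq_natDegree (fpol_ne_zero m), fpol_natDegree]; rfl
    rw [h2]
    exact lt_of_le_of_lt h1 (by decide)
  have hzero : (C u + C v * X + C w * X ^ 2 : ℚ[X]) = 0 :=
    eq_zero_of_dvd_of_degree_lt hdvd hdeg
  have hc : ∀ i, (C u + C v * X + C w * X ^ 2 : ℚ[X]).coeff i = 0 := by
    rw [hzero]; simp
  have h0 := hc 0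
  have h1 := hc 1
  have h2 := hc 2
  simp [coeff_add, coeff_C, coeff_C_mul, coeff_X, coeff_X_pow] at h0 h1 h2
  exact ⟨h0, h1, h2⟩

lemma x_sub_theta_ne (x : ℚ) : algebraMap ℚ (Kf m) x - θf m ≠ 0 := by
  intro h
  have h' : algebraMap ℚ (Kf m) x + algebraMap ℚ (Kf m) (-1) * θf m
      + algebraMap ℚ (Kf m) 0 * (θf m) ^ 2 = 0 := by
    rw [map_neg, map_one, map_zero]
    linear_combination h
  have := (coords_vanish m x (-1) 0 h').2.1
  norm_num at this

/-- every element of K is a polynomial of degree ≤ 2 in θ -/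
lemma repr_theta (z : Kf m) : ∃ q0 q1 q2 : ℚ,
    z = algebraMap ℚ (Kf m) q0 + algebraMap ℚ (Kf m) q1 * θf m
      + algebraMap ℚ (Kf m) q2 * (θf m) ^ 2 := by
  obtain ⟨p, rfl⟩ := AdjoinRoot.mk_surjective z
  set r := p %ₘ (fpol m) with hr
  have hmkr : AdjoinRoot.mk (fpol m) p = AdjoinRoot.mk (fpol m) r := by
    have hsum := modByMonic_add_div p (fpol m)
    conv_lhs => rw [← hsum]
    rw [map_add, map_mul, AdjoinRoot.mk_self, zero_mul, add_zero]
  have hdeg : r.degree < 3 := by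
    have := degree_modByMonic_lt p (fpol_monic m)
    rw [degree_eq_natDegree (fpol_ne_zero m), fpol_natDegree] at this
    exact_mod_cast this
  refine ⟨r.coeff 0, r.coeff 1, r.coeff 2, ?_⟩
  rw [hmkr]
  have hrexp : r = C (r.coeff 0) + C (r.coeff 1) * X + C (r.coeff 2) * X ^ 2 := by
    ext i
    match i with
    | 0 => simp [coeff_add, coeff_C, coeff_C_mul, coeff_X, coeff_X_pow]
    | 1 => simp [coeff_add, coeff_C, coeff_C_mul, coeff_X, coeff_X_pow]
    | 2 => simp [coeff_add, coeff_C, coeff_C_mul, coeff_X, coeff_X_pow]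
    | (n + 3) =>
      have h1 : r.coeff (n + 3) = 0 := by
        apply coeff_eq_zero_of_degree_lt
        refine lt_of_lt_of_le hdeg ?_
        exact_mod_cast (show (3:ℕ) ≤ n + 3 by omega)
      simp [h1, coeff_add, coeff_C, coeff_C_mul, coeff_X, coeff_X_pow]
  conv_lhs => rw [hrexp]
  rw [map_add, map_add, map_mul, map_mul, map_pow,
    AdjoinRoot.mk_X, AdjoinRoot.mk_C, AdjoinRoot.mk_C, AdjoinRoot.mk_C]
  rfl

/-- integer representation with common denominator -/
lemma int_repr (z : Kf m) : ∃ a b c d : ℤ, d ≠ 0 ∧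
    algebraMap ℚ (Kf m) ((d : ℚ)) * z = algebraMap ℚ (Kf m) ((a : ℚ))
      + algebraMap ℚ (Kf m) ((b : ℚ)) * θf m
      + algebraMap ℚ (Kf m) ((c : ℚ)) * (θf m) ^ 2 := by
  obtain ⟨q0, q1, q2, hz⟩ := repr_theta m z
  refine ⟨q0.num * q1.den * q2.den, q0.den * q1.num * q2.den, q0.den * q1.den * q2.num,
    (q0.den : ℤ) * q1.den * q2.den, ?_, ?_⟩
  · positivity
  have e0 : (q0.num : ℚ) = q0 * q0.den := (div_eq_iff (by exact_mod_cast q0.den_nz)).1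
    (Rat.num_div_den q0)
  have e1 : (q1.num : ℚ) = q1 * q1.den := (div_eq_iff (by exact_mod_cast q1.den_nz)).1
    (Rat.num_div_den q1)
  have e2 : (q2.num : ℚ) = q2 * q2.den := (div_eq_iff (by exact_mod_cast q2.den_nz)).1
    (Rat.num_div_den q2)
  rw [hz]
  rw [show ((q0.num * q1.den * q2.den : ℤ) : ℚ)
      = ((q0.den : ℤ) * q1.den * q2.den : ℤ) * q0 by push_cast; rw [e0]; ring]
  rw [show ((q0.den * q1.num * q2.den : ℤ) : ℚ)
      = ((q0.den : ℤ) * q1.den * q2.den : ℤ) * q1 by push_cast; rw [e1]; ring]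
  rw [show ((q0.den * q1.den * q2.num : ℤ) : ℚ)
      = ((q0.den : ℤ) * q1.den * q2.den : ℤ) * q2 by push_cast; rw [e2]; ring]
  rw [map_mul, map_mul, map_mul]
  ring

/-- The bridge: a square in K with integer coordinate vector (c0,c1,c2) yields an
integer solution of the three quadratic equations. -/
lemma bridge (c0 c1 c2 : ℤ) (s : Kf m)
    (hs : s ^ 2 = algebraMap ℚ (Kf m) ((c0 : ℚ)) + algebraMap ℚ (Kf m) ((c1 : ℚ)) * θf m
      + algebraMap ℚ (Kf m) ((c2 : ℚ)) * (θf m) ^ 2) :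
    ∃ a b c d : ℤ, d ≠ 0 ∧ a ^ 2 - 2 * b * c * m ^ 6 = d ^ 2 * c0 ∧
      2 * a * b + 2 * b * c - c ^ 2 * m ^ 6 = d ^ 2 * c1 ∧
      b ^ 2 + 2 * a * c + c ^ 2 = d ^ 2 * c2 := by
  obtain ⟨a, b, c, d, hd0, hrepr⟩ := int_repr m s
  refine ⟨a, b, c, d, hd0, ?_⟩
  set α := algebraMap ℚ (Kf m) with hα
  set θ := θf m with hθdef
  have hθ : θ ^ 3 = θ - α ((m : ℚ)) ^ 6 := by
    rw [hα, ← map_pow]; exact theta_cubed m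
  have key : α ((a : ℚ) ^ 2 - 2 * b * c * (m : ℚ) ^ 6 - (d : ℚ) ^ 2 * c0)
      + α (2 * a * b + 2 * b * c - (c : ℚ) ^ 2 * (m : ℚ) ^ 6 - (d : ℚ) ^ 2 * c1) * θ
      + α ((b : ℚ) ^ 2 + 2 * a * c + (c : ℚ) ^ 2 - (d : ℚ) ^ 2 * c2) * θ ^ 2 = 0 := by
    have hA : α ((a : ℚ) ^ 2 - 2 * b * c * (m : ℚ) ^ 6 - (d : ℚ) ^ 2 * c0)
        = α a ^ 2 - 2 * α b * α c * α m ^ 6 - α d ^ 2 * α c0 := by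
      push_cast
      rw [map_sub, map_sub, map_mul, map_mul, map_mul, map_mul, map_pow, map_pow, map_pow,
        map_ofNat]
    have hB : α (2 * a * b + 2 * b * c - (c : ℚ) ^ 2 * (m : ℚ) ^ 6 - (d : ℚ) ^ 2 * c1)
        = 2 * α a * α b + 2 * α b * α c - α c ^ 2 * α m ^ 6 - α d ^ 2 * α c1 := by
      push_cast
      rw [map_sub, map_sub, map_add, map_mul, map_mul, map_mul, map_mul, map_mul, map_mul,
        map_pow, map_pow, map_pow, map_ofNat]
    have hC : α ((b : ℚ) ^ 2 + 2 * a * c + (c : ℚ) ^ 2 - (d : ℚ) ^ 2 * c2)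
        = α b ^ 2 + 2 * α a * α c + α c ^ 2 - α d ^ 2 * α c2 := by
      push_cast
      rw [map_sub, map_add, map_add, map_mul, map_mul, map_mul, map_pow, map_pow, map_pow,
        map_ofNat]
    rw [hA, hB, hC]
    linear_combination (-(α d * s + α a + α b * θ + α c * θ ^ 2)) * hrepr
      + α d ^ 2 * hs + (-(2 * α b * α c + α c ^ 2 * θ)) * hθ
  obtain ⟨h0, h1, h2⟩ := coords_vanish m _ _ _ key
  exact ⟨by exact_mod_cast sub_eq_zero.mp h0, by exact_mod_cast sub_eq_zero.mp h1,
    by exact_mod_cast sub_eq_zero.mp h2⟩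

end Kfield




/-! ### Generic algebraic identities for the secant/tangent construction -/

section Identities

variable {R : Type*} [CommRing R]

lemma chord_id (x1 y1 x2 y2 L t MM : R)
    (h1 : y1 ^ 2 = x1 ^ 3 - x1 + MM) (h2 : y2 ^ 2 = x2 ^ 3 - x2 + MM)
    (ht : t ^ 3 = t - MM) (hL : L * (x1 - x2) = y1 - y2) :
    (x1 - x2) ^ 2 * ((x1 - t) * (x2 - t) * ((L ^ 2 - x1 - x2) - t)
      - (y1 + L * (t - x1)) ^ 2) = 0 := by
  linear_combination (x2*y2*t + x2^2*L*t + y1*x2*t - x1*y2*t - 2*x1*x2*L*t - x1*x2*y2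
      - x1*x2^2*L - x1*y1*t - x1*y1*x2 + x1^2*L*t + x1^2*y2 + 2*x1^2*x2*L + x1^2*y1
      - x1^3*L) * hL
    + (x2*t - x2^2 - x1*t + x1*x2) * h1
    + (-(x2*t) + x1*t + x1*x2 - x1^2) * h2
    + (-(x2^2) + 2*x1*x2 - x1^2) * ht

lemma tangent_id (x1 y1 L t MM : R)
    (h1 : y1 ^ 2 = x1 ^ 3 - x1 + MM) (ht : t ^ 3 = t - MM)
    (hL : L * (2 * y1) = 3 * x1 ^ 2 - 1) :
    (2 * y1) ^ 2 * ((x1 - t) * (x1 - t) * ((L ^ 2 - x1 - x1) - t)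
      - (y1 + L * (t - x1)) ^ 2) = 0 := by
  linear_combination (-4*y1^2*t + 4*x1*y1^2) * hL
    + (-4*MM + 4*t - 4*t^3 - 4*y1^2) * h1
    + (-4*MM + 4*x1 - 4*x1^3) * ht

end Identities

/-! ### The curve `Em` -/


namespace EmAux

open WeierstrassCurve WeierstrassCurve.Affine

variable (m : ℤ)

@[simp] lemma Em_a1 : (Em m).toAffine.a₁ = 0 := rfl
@[simp] lemma Em_a2 : (Em m).toAffine.a₂ = 0 := rfl
@[simp] lemma Em_a3 : (Em m).toAffine.a₃ = 0 := rfl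
@[simp] lemma Em_a4 : (Em m).toAffine.a₄ = -1 := rfl
@[simp] lemma Em_a6 : (Em m).toAffine.a₆ = (m : ℚ) ^ 6 := rfl

lemma Em_equation {x y : ℚ} (h : (Em m).toAffine.Equation x y) :
    y ^ 2 = x ^ 3 - x + (m : ℚ) ^ 6 := by
  rw [WeierstrassCurve.Affine.equation_iff] at h
  simp only [Em_a1, Em_a2, Em_a3, Em_a4, Em_a6] at h
  linear_combination h

lemma Em_negY (x y : ℚ) : (Em m).toAffine.negY x y = -y := by
  simp [WeierstrassCurve.Affine.negY]

variable [Fact (Irreducible (fpol m))]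

noncomputable def Sq : Subgroup (Kf m)ˣ := (powMonoidHom 2 : (Kf m)ˣ →* (Kf m)ˣ).range

noncomputable def unitOf (x : ℚ) : (Kf m)ˣ :=
  Units.mk0 (algebraMap ℚ (Kf m) x - θf m) (x_sub_theta_ne m x)

noncomputable def phiCls (x : ℚ) : (Kf m)ˣ ⧸ Sq m :=
  QuotientGroup.mk (unitOf m x)

lemma cls_sq (u : (Kf m)ˣ) : (QuotientGroup.mk u : (Kf m)ˣ ⧸ Sq m) ^ 2 = 1 := by
  rw [← QuotientGroup.mk_pow, QuotientGroup.eq_one_iff]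
  exact ⟨u, rfl⟩

lemma q2_sq (g : (Kf m)ˣ ⧸ Sq m) : g ^ (2 : ℤ) = 1 := by
  induction g using QuotientGroup.induction_on with
  | _ u => rw [show ((2:ℤ)) = ((2:ℕ):ℤ) by norm_num, zpow_natCast]; exact cls_sq m u

/-- key multiplicativity: if (x1-θ)(x2-θ)(x3-θ) is a square then
`phiCls x3 = phiCls x1 * phiCls x2`. -/
lemma phiCls_mul (x1 x2 x3 : ℚ) (s : Kf m)
    (hs : (algebraMap ℚ (Kf m) x1 - θf m) * (algebraMap ℚ (Kf m) x2 - θf m)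
      * (algebraMap ℚ (Kf m) x3 - θf m) = s ^ 2) :
    phiCls m x3 = phiCls m x1 * phiCls m x2 := by
  have hs0 : s ≠ 0 := by
    intro h
    rw [h] at hs
    simp only [ne_eq, OfNat.ofNat_ne_zero, not_false_eq_true, zero_pow, mul_eq_zero] at hs
    rcases hs with (h' | h') | h'
    · exact x_sub_theta_ne m x1 h'
    · exact x_sub_theta_ne m x2 h'
    · exact x_sub_theta_ne m x3 h'
  have hmem : unitOf m x1 * unitOf m x2 * unitOf m x3 ∈ Sq m := by
    refine ⟨Units.mk0 s hs0, ?_⟩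
    ext
    simp only [powMonoidHom_apply, Units.val_pow_eq_pow_val, Units.val_mul, Units.val_mk0,
      unitOf]
    exact hs.symm
  have h1 : (phiCls m x1) * (phiCls m x2) * (phiCls m x3) = 1 := by
    rw [phiCls, phiCls, phiCls, ← QuotientGroup.mk_mul, ← QuotientGroup.mk_mul,
      QuotientGroup.eq_one_iff]
    exact hmem
  have h3sq : (phiCls m x3) * (phiCls m x3) = 1 := by
    have := cls_sq m (unitOf m x3)
    rwa [pow_two] at this
  calc phiCls m x3 = (phiCls m x1 * phiCls m x2 * phiCls m x3) * phiCls m x3 := by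
        rw [h1]; exact (one_mul (phiCls m x3)).symm
    _ = phiCls m x1 * phiCls m x2 * (phiCls m x3 * phiCls m x3) := mul_assoc _ _ _
    _ = phiCls m x1 * phiCls m x2 := by
        rw [h3sq]; exact mul_one (phiCls m x1 * phiCls m x2)

noncomputable def phiFun : (Em m).toAffine.Point → (Kf m)ˣ ⧸ Sq m := fun P =>
  match P with
  | .zero => 1
  | @WeierstrassCurve.Affine.Point.some _ _ _ x _ _ => phiCls m x

@[simp] lemma phiFun_zero : phiFun m 0 = 1 := rfl

@[simp] lemma phiFun_some {x y : ℚ} (h : (Em m).toAffine.Nonsingular x y) :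
    phiFun m (.some _ _ h) = phiCls m x := rfl

lemma algebraMap_injective' : Function.Injective (algebraMap ℚ (Kf m)) :=
  (algebraMap ℚ (Kf m)).injective

/-- main: phiFun is additive -/
lemma phiFun_add (P Q : (Em m).toAffine.Point) :
    phiFun m (P + Q) = phiFun m P * phiFun m Q := by
  rcases P with _ | @⟨x1, y1, h1⟩
  · rw [← WeierstrassCurve.Affine.Point.zero_def, zero_add, phiFun_zero]
    exact (one_mul (phiFun m Q)).symm
  rcases Q with _ | @⟨x2, y2, h2⟩
  · rw [← WeierstrassCurve.Affine.Point.zero_def, add_zero, phiFun_zero]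
    exact (mul_one (phiFun m (WeierstrassCurve.Affine.Point.some _ _ h1))).symm
  set α := algebraMap ℚ (Kf m) with hα
  have hθ : (θf m) ^ 3 = θf m - α ((m:ℚ)) ^ 6 := by rw [hα, ← map_pow]; exact theta_cubed m
  have hq1 : y1 ^ 2 = x1 ^ 3 - x1 + (m : ℚ) ^ 6 := Em_equation m h1.1
  have hq2 : y2 ^ 2 = x2 ^ 3 - x2 + (m : ℚ) ^ 6 := Em_equation m h2.1
  have hK1 : (α y1) ^ 2 = (α x1) ^ 3 - α x1 + (α (m:ℚ)) ^ 6 := by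
    have := congrArg α hq1
    simpa only [map_add, map_sub, map_pow] using this
  have hK2 : (α y2) ^ 2 = (α x2) ^ 3 - α x2 + (α (m:ℚ)) ^ 6 := by
    have := congrArg α hq2
    simpa only [map_add, map_sub, map_pow] using this
  by_cases hxy : x1 = x2 ∧ y1 = (Em m).toAffine.negY x2 y2
  · rw [WeierstrassCurve.Affine.Point.add_of_Y_eq hxy.1 hxy.2, phiFun_zero,
      phiFun_some, phiFun_some, hxy.1]
    have hsq := cls_sq m (unitOf m x2)
    rw [pow_two] at hsq
    exact hsq.symm
  · push_neg at hxy
    rw [WeierstrassCurve.Affine.Point.add_some (not_and.mpr hxy), phiFun_some, phiFun_some, phiFun_some]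
    set L := (Em m).toAffine.slope x1 x2 y1 y2 with hLdef
    have haddX : (Em m).toAffine.addX x1 x2 L = L ^ 2 - x1 - x2 := by
      simp [WeierstrassCurve.Affine.addX]
    set s : Kf m := α y1 + α L * (θf m - α x1) with hsdef
    have hprod : (α x1 - θf m) * (α x2 - θf m) * (α (L ^ 2 - x1 - x2) - θf m) = s ^ 2 := by
      have hx3 : α (L ^ 2 - x1 - x2) = (α L) ^ 2 - α x1 - α x2 := by
        simp only [map_sub, map_pow]
      rw [hx3, hsdef]
      by_cases hx : x1 = x2
      · -- tangent case
        subst hx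
        have hyy : y1 = y2 := by
          rcases WeierstrassCurve.Affine.Y_eq_of_X_eq h1.1 h2.1 rfl with h | h
          · exact h
          · exact absurd h (hxy rfl)
        subst hyy
        have hy0 : y1 ≠ 0 := by
          intro h0
          exact hxy rfl (by rw [Em_negY, h0, neg_zero])
        have hLq : L * (2 * y1) = 3 * x1 ^ 2 - 1 := by
          rw [hLdef, WeierstrassCurve.Affine.slope_of_Y_ne rfl (hxy rfl)]
          rw [Em_negY]
          simp only [Em_a1, Em_a2, Em_a4]
          field_simp [hy0]
          ring
        have hKL : (α L) * (2 * α y1) = 3 * (α x1) ^ 2 - 1 := by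
          have := congrArg α hLq
          simpa only [map_mul, map_sub, map_add, map_pow, map_one, map_ofNat] using this
        have hid := tangent_id (α x1) (α y1) (α L) (θf m) (α ((m:ℚ)) ^ 6) hK1 hθ hKL
        have h2y : (2 * α y1) ≠ 0 := by
          refine mul_ne_zero two_ne_zero ?_
          simpa using fun h => hy0 (algebraMap_injective' m (by rw [h, map_zero]))
        have := mul_eq_zero.1 hid
        rcases this with h' | h'
        · exact absurd h' (pow_ne_zero 2 h2y)
        · linear_combination h'
      · -- chord case
        have hLq : L * (x1 - x2) = y1 - y2 := by
          rw [hLdef, WeierstrassCurve.Affine.slope_of_X_ne hx]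
          exact div_mul_cancel₀ _ (sub_ne_zero.2 hx)
        have hKL : (α L) * (α x1 - α x2) = α y1 - α y2 := by
          have := congrArg α hLq
          simpa only [map_mul, map_sub] using this
        have hid := chord_id (α x1) (α y1) (α x2) (α y2) (α L) (θf m) (α ((m:ℚ)) ^ 6)
          hK1 hK2 hθ hKL
        have hxx : (α x1 - α x2) ≠ 0 := by
          rw [sub_ne_zero]
          exact fun h => hx (algebraMap_injective' m h)
        rcases mul_eq_zero.1 hid with h' | h'
        · exact absurd h' (pow_ne_zero 2 hxx)
        · linear_combination h'
    rw [haddX]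
    exact phiCls_mul m x1 x2 (L ^ 2 - x1 - x2) s hprod

end EmAux

/-! ### abstract group helpers -/

section GrpHelpers

variable {G : Type*} [CommGroup G]

lemma grp_parity (hsq : ∀ g : G, g * g = 1) (g1 g2 g3 : G) (a b c : ℤ)
    (h : g1 ^ a * g2 ^ b * g3 ^ c = 1) :
    g1 ^ (a % 2) * g2 ^ (b % 2) * g3 ^ (c % 2) = 1 := by
  have key : ∀ (g : G) (n : ℤ), g ^ n = g ^ (n % 2) := by
    intro g n
    conv_lhs => rw [show n = 2 * (n / 2) + n % 2 by omega]
    rw [zpow_add, zpow_mul, show g ^ (2 : ℤ) = 1 from (zpow_two g).trans (hsq g),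
      one_zpow, one_mul]
  rw [← key, ← key, ← key]
  exact h

lemma case100 (g1 g2 g3 : G) (h : g1 ^ (1:ℤ) * g2 ^ (0:ℤ) * g3 ^ (0:ℤ) = 1) : g1 = 1 := by
  rwa [zpow_one, zpow_zero, zpow_zero, mul_one, mul_one] at h
lemma case010 (g1 g2 g3 : G) (h : g1 ^ (0:ℤ) * g2 ^ (1:ℤ) * g3 ^ (0:ℤ) = 1) : g2 = 1 := by
  rwa [zpow_one, zpow_zero, zpow_zero, one_mul, mul_one] at h
lemma case001 (g1 g2 g3 : G) (h : g1 ^ (0:ℤ) * g2 ^ (0:ℤ) * g3 ^ (1:ℤ) = 1) : g3 = 1 := by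
  rwa [zpow_one, zpow_zero, zpow_zero, one_mul, one_mul] at h
lemma case110 (g1 g2 g3 : G) (h : g1 ^ (1:ℤ) * g2 ^ (1:ℤ) * g3 ^ (0:ℤ) = 1) : g1 * g2 = 1 := by
  rwa [zpow_one, zpow_one, zpow_zero, mul_one] at h
lemma case101 (g1 g2 g3 : G) (h : g1 ^ (1:ℤ) * g2 ^ (0:ℤ) * g3 ^ (1:ℤ) = 1) : g1 * g3 = 1 := by
  rwa [zpow_one, zpow_zero, zpow_one, mul_one] at h
lemma case011 (g1 g2 g3 : G) (h : g1 ^ (0:ℤ) * g2 ^ (1:ℤ) * g3 ^ (1:ℤ) = 1) : g2 * g3 = 1 := by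
  rwa [zpow_one, zpow_one, zpow_zero, one_mul] at h
lemma case111 (g1 g2 g3 : G) (h : g1 ^ (1:ℤ) * g2 ^ (1:ℤ) * g3 ^ (1:ℤ) = 1) :
    g1 * g2 * g3 = 1 := by
  rwa [zpow_one, zpow_one, zpow_one] at h

end GrpHelpers

namespace EmAux

open WeierstrassCurve WeierstrassCurve.Affine

variable (m : ℤ) [Fact (Irreducible (fpol m))]

lemma q2_mul_self (g : (Kf m)ˣ ⧸ Sq m) : g * g = 1 := by
  induction g using QuotientGroup.induction_on with
  | _ u =>
    rw [← QuotientGroup.mk_mul, QuotientGroup.eq_one_iff]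
    exact ⟨u, by rw [powMonoidHom_apply, pow_two]⟩

lemma cls_one_sq (x : ℚ) (h : phiCls m x = 1) :
    ∃ s : Kf m, s ^ 2 = algebraMap ℚ (Kf m) x - θf m := by
  rw [phiCls, QuotientGroup.eq_one_iff] at h
  obtain ⟨w, hw⟩ := h
  refine ⟨((w : (Kf m)ˣ) : Kf m), ?_⟩
  have h2 := congrArg Units.val hw
  rw [powMonoidHom_apply, Units.val_pow_eq_pow_val] at h2
  simpa [unitOf] using h2

lemma cls_mul_sq (x y : ℚ) (h : phiCls m x * phiCls m y = 1) :
    ∃ s : Kf m, s ^ 2 = (algebraMap ℚ (Kf m) x - θf m) * (algebraMap ℚ (Kf m) y - θf m) := by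
  rw [phiCls, phiCls, ← QuotientGroup.mk_mul, QuotientGroup.eq_one_iff] at h
  obtain ⟨w, hw⟩ := h
  refine ⟨((w : (Kf m)ˣ) : Kf m), ?_⟩
  have h2 := congrArg Units.val hw
  rw [powMonoidHom_apply, Units.val_pow_eq_pow_val, Units.val_mul] at h2
  simpa [unitOf] using h2

lemma cls_mul3_sq (x y z : ℚ) (h : phiCls m x * phiCls m y * phiCls m z = 1) :
    ∃ s : Kf m, s ^ 2 = (algebraMap ℚ (Kf m) x - θf m) * (algebraMap ℚ (Kf m) y - θf m)
      * (algebraMap ℚ (Kf m) z - θf m) := by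
  rw [phiCls, phiCls, phiCls, ← QuotientGroup.mk_mul, ← QuotientGroup.mk_mul,
    QuotientGroup.eq_one_iff] at h
  obtain ⟨w, hw⟩ := h
  refine ⟨((w : (Kf m)ˣ) : Kf m), ?_⟩
  have h2 := congrArg Units.val hw
  rw [powMonoidHom_apply, Units.val_pow_eq_pow_val, Units.val_mul, Units.val_mul] at h2
  simpa [unitOf] using h2

/-! ### the seven nonsquare facts -/

lemma no_square_gen (k : ℤ) (hk : 2 ≤ k) (c0 c1 c2 : ℤ)
    (hstep : ∀ a b c d : ℤ, a ^ 2 - 2 * b * c * m ^ 6 = d ^ 2 * c0 →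
      2 * a * b + 2 * b * c - c ^ 2 * m ^ 6 = d ^ 2 * c1 →
      b ^ 2 + 2 * a * c + c ^ 2 = d ^ 2 * c2 → k ∣ a ∧ k ∣ b ∧ k ∣ c ∧ k ∣ d)
    (s : Kf m)
    (hs : s ^ 2 = algebraMap ℚ (Kf m) ((c0 : ℚ)) + algebraMap ℚ (Kf m) ((c1 : ℚ)) * θf m
      + algebraMap ℚ (Kf m) ((c2 : ℚ)) * (θf m) ^ 2) : False := by
  obtain ⟨a, b, c, d, hd0, E0, E1, E2⟩ := bridge m c0 c1 c2 s hs
  have hk2 : (k ^ 2 : ℤ) ≠ 0 := pow_ne_zero 2 (by omega)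
  refine hd0 (descent_int k hk (fun a b c d =>
      a ^ 2 - 2 * b * c * m ^ 6 = d ^ 2 * c0 ∧
      2 * a * b + 2 * b * c - c ^ 2 * m ^ 6 = d ^ 2 * c1 ∧
      b ^ 2 + 2 * a * c + c ^ 2 = d ^ 2 * c2)
    (fun a b c d h => hstep a b c d h.1 h.2.1 h.2.2)
    (fun a b c d h => ?_) a b c d ⟨E0, E1, E2⟩)
  obtain ⟨F0, F1, F2⟩ := h
  refine ⟨mul_left_cancel₀ hk2 ?_, mul_left_cancel₀ hk2 ?_, mul_left_cancel₀ hk2 ?_⟩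
  · linear_combination F0
  · linear_combination F1
  · linear_combination F2

lemma nsq_A (h3 : 3 ∣ m) (s : Kf m) :
    s ^ 2 ≠ algebraMap ℚ (Kf m) 0 - θf m := by
  intro hs
  refine no_square_gen m 3 (by norm_num) 0 (-1) 0 ?_ s ?_
  · intro a b c d E0 E1 E2
    exact caseA_step m h3 a b c d (by linear_combination E0) (by linear_combination E1)
      (by linear_combination E2)
  · rw [hs]
    push_cast
    ring

lemma nsq_B (h3 : 3 ∣ m) (s : Kf m) :
    s ^ 2 ≠ algebraMap ℚ (Kf m) (-1) - θf m := by
  intro hs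
  refine no_square_gen m 3 (by norm_num) (-1) (-1) 0 ?_ s ?_
  · intro a b c d E0 E1 E2
    exact caseB_step m h3 a b c d (by linear_combination E0) (by linear_combination E1)
      (by linear_combination E2)
  · rw [hs]
    push_cast
    ring

lemma nsq_C (h3 : 3 ∣ m) (s : Kf m) :
    s ^ 2 ≠ algebraMap ℚ (Kf m) (-(m:ℚ) ^ 2) - θf m := by
  intro hs
  refine no_square_gen m 3 (by norm_num) (-(m^2)) (-1) 0 ?_ s ?_
  · intro a b c d E0 E1 E2
    exact caseC_step m h3 a b c d (by linear_combination E0) (by linear_combination E1)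
      (by linear_combination E2)
  · rw [hs]
    push_cast
    ring

lemma nsq_AB (h3 : 3 ∣ m) (s : Kf m) :
    s ^ 2 ≠ (algebraMap ℚ (Kf m) 0 - θf m) * (algebraMap ℚ (Kf m) (-1) - θf m) := by
  intro hs
  refine no_square_gen m 3 (by norm_num) 0 1 1 ?_ s ?_
  · intro a b c d E0 E1 E2
    exact caseAB_step m h3 a b c d (by linear_combination E0) (by linear_combination E1)
      (by linear_combination E2)
  · rw [hs]
    push_cast
    ring

lemma nsq_AC (hodd : Odd m) (s : Kf m) :
    s ^ 2 ≠ (algebraMap ℚ (Kf m) 0 - θf m) * (algebraMap ℚ (Kf m) (-(m:ℚ) ^ 2) - θf m) := by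
  intro hs
  refine no_square_gen m 2 (by norm_num) 0 (m ^ 2) 1 ?_ s ?_
  · intro a b c d E0 E1 E2
    exact caseAC_step m hodd a b c d (by linear_combination E0) (by linear_combination E1)
      (by linear_combination E2)
  · rw [hs]
    push_cast
    ring

lemma nsq_BC (h3 : 3 ∣ m) (s : Kf m) :
    s ^ 2 ≠ (algebraMap ℚ (Kf m) (-1) - θf m) * (algebraMap ℚ (Kf m) (-(m:ℚ) ^ 2) - θf m) := by
  intro hs
  refine no_square_gen m 3 (by norm_num) (m ^ 2) (1 + m ^ 2) 1 ?_ s ?_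
  · intro a b c d E0 E1 E2
    exact caseBC_step m h3 a b c d (by linear_combination E0) (by linear_combination E1)
      (by linear_combination E2)
  · rw [hs]
    push_cast
    ring

lemma nsq_ABC (h3 : 3 ∣ m) (hm0 : m ≠ 0) (s : Kf m) :
    s ^ 2 ≠ (algebraMap ℚ (Kf m) 0 - θf m) * (algebraMap ℚ (Kf m) (-1) - θf m)
      * (algebraMap ℚ (Kf m) (-(m:ℚ) ^ 2) - θf m) := by
  intro hs
  refine no_square_gen m 3 (by norm_num) (m ^ 6) (-1 - m ^ 2) (-1 - m ^ 2) ?_ s ?_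
  · intro a b c d E0 E1 E2
    exact caseABC_step m h3 hm0 a b c d (by linear_combination E0) (by linear_combination E1)
      (by linear_combination E2)
  · rw [hs]
    have hθ : (θf m) ^ 3 = θf m - algebraMap ℚ (Kf m) ((m:ℚ)) ^ 6 := by
      rw [← map_pow]; exact theta_cubed m
    push_cast
    linear_combination (-1 : Kf m) * hθ

/-! ### no 2-torsion -/

lemma tors (hodd : Odd m) (T : (Em m).toAffine.Point) (hT : T + T = 0) : T = 0 := by
  rcases T with _ | @⟨x, y, h⟩
  · rfl
  exfalso
  by_cases hy : y = (Em m).toAffine.negY x y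
  · have hy0 : y = 0 := by rw [Em_negY] at hy; linarith
    have heq := Em_equation m h.1
    rw [hy0] at heq
    exact no_rat_root m hodd x (by linear_combination -heq)
  · rw [WeierstrassCurve.Affine.Point.add_self_of_Y_ne hy] at hT
    exact WeierstrassCurve.Affine.Point.some_ne_zero _ hT

/-! ### the homomorphism to the square-class group -/

noncomputable def psi : (Em m).toAffine.Point →+ Additive ((Kf m)ˣ ⧸ Sq m) :=
  AddMonoidHom.mk' (fun P => Additive.ofMul (phiFun m P)) (by
    intro P Q
    show Additive.ofMul (phiFun m (P + Q)) = _
    rw [phiFun_add]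
    rfl)

lemma psi_some {x y : ℚ} (h : (Em m).toAffine.Nonsingular x y) :
    Additive.toMul (psi m (WeierstrassCurve.Affine.Point.some _ _ h)) = phiCls m x := rfl

/-! ### master induction -/

lemma relations_trivial (hm : 1 < m) (hodd : Odd m) (h3 : 3 ∣ m)
    {yP yQ yR : ℚ}
    (hP : (Em m).toAffine.Nonsingular 0 yP)
    (hQ : (Em m).toAffine.Nonsingular (-1) yQ)
    (hR : (Em m).toAffine.Nonsingular (-(m:ℚ) ^ 2) yR) :
    ∀ n : ℕ, ∀ a b c : ℤ, a.natAbs + b.natAbs + c.natAbs ≤ n →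
      a • WeierstrassCurve.Affine.Point.some _ _ hP + b • WeierstrassCurve.Affine.Point.some _ _ hQ
        + c • WeierstrassCurve.Affine.Point.some _ _ hR = 0 →
      a = 0 ∧ b = 0 ∧ c = 0 := by
  intro n
  induction n with
  | zero => intro a b c hn _; omega
  | succ n ih =>
    intro a b c hn hrel
    -- step 1 : congruence via psi
    have happ := congrArg (psi m) hrel
    rw [map_zero, map_add, map_add, map_zsmul, map_zsmul, map_zsmul] at happ
    have htm := congrArg Additive.toMul happ
    simp only [toMul_add, toMul_zsmul, toMul_zero] at htm
    rw [psi_some, psi_some, psi_some] at htm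
    have hpar8 := grp_parity (q2_mul_self m) _ _ _ a b c htm
    have ha2 : a % 2 = 0 ∨ a % 2 = 1 := by omega
    have hb2 : b % 2 = 0 ∨ b % 2 = 1 := by omega
    have hc2 : c % 2 = 0 ∨ c % 2 = 1 := by omega
    have hm0 : m ≠ 0 := by omega
    have hpar : a % 2 = 0 ∧ b % 2 = 0 ∧ c % 2 = 0 := by
      rcases ha2 with ha | ha <;> rcases hb2 with hb | hb <;> rcases hc2 with hc | hc
      · exact ⟨ha, hb, hc⟩
      · rw [ha, hb, hc] at hpar8
        obtain ⟨s, hs⟩ := cls_one_sq m _ (case001 _ _ _ hpar8)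
        exact absurd hs (nsq_C m h3 s)
      · rw [ha, hb, hc] at hpar8
        obtain ⟨s, hs⟩ := cls_one_sq m _ (case010 _ _ _ hpar8)
        exact absurd hs (nsq_B m h3 s)
      · rw [ha, hb, hc] at hpar8
        obtain ⟨s, hs⟩ := cls_mul_sq m _ _ (case011 _ _ _ hpar8)
        exact absurd hs (nsq_BC m h3 s)
      · rw [ha, hb, hc] at hpar8
        obtain ⟨s, hs⟩ := cls_one_sq m _ (case100 _ _ _ hpar8)
        exact absurd hs (nsq_A m h3 s)
      · rw [ha, hb, hc] at hpar8
        obtain ⟨s, hs⟩ := cls_mul_sq m _ _ (case101 _ _ _ hpar8)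
        exact absurd hs (nsq_AC m hodd s)
      · rw [ha, hb, hc] at hpar8
        obtain ⟨s, hs⟩ := cls_mul_sq m _ _ (case110 _ _ _ hpar8)
        exact absurd hs (nsq_AB m h3 s)
      · rw [ha, hb, hc] at hpar8
        obtain ⟨s, hs⟩ := cls_mul3_sq m _ _ _ (case111 _ _ _ hpar8)
        exact absurd hs (nsq_ABC m h3 hm0 s)
    obtain ⟨a', ha'⟩ : ∃ a', a = 2 * a' := ⟨a / 2, by omega⟩
    obtain ⟨b', hb'⟩ : ∃ b', b = 2 * b' := ⟨b / 2, by omega⟩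
    obtain ⟨c', hc'⟩ : ∃ c', c = 2 * c' := ⟨c / 2, by omega⟩
    set T := a' • WeierstrassCurve.Affine.Point.some _ _ hP
      + b' • WeierstrassCurve.Affine.Point.some _ _ hQ
      + c' • WeierstrassCurve.Affine.Point.some _ _ hR with hTdef
    have hTT : T + T = 0 := by
      have heq : T + T = a • WeierstrassCurve.Affine.Point.some _ _ hP
          + b • WeierstrassCurve.Affine.Point.some _ _ hQ
          + c • WeierstrassCurve.Affine.Point.some _ _ hR := by
        rw [hTdef, ha', hb', hc']
        module
      rw [heq, hrel]
    have hT0 := tors m hodd T hTT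
    have hsz : a'.natAbs + b'.natAbs + c'.natAbs ≤ n := by
      have e1 : a.natAbs = 2 * a'.natAbs := by rw [ha']; rw [Int.natAbs_mul]; rfl
      have e2 : b.natAbs = 2 * b'.natAbs := by rw [hb']; rw [Int.natAbs_mul]; rfl
      have e3 : c.natAbs = 2 * c'.natAbs := by rw [hc']; rw [Int.natAbs_mul]; rfl
      omega
    obtain ⟨hA, hB, hC⟩ := ih a' b' c' hsz hT0
    omega

end EmAux


/-- For `m > 1` an odd integer divisible by `3`, the points `P = (0, m³)`, `Q = (-1, m³)` and
`R = (-m², m)` on `E_m : y² = x³ - x + m⁶` are linearly independent over `ℤ` in `E_m(ℚ)`;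
in particular the rank of `E_m(ℚ)` is at least `3`. -/
theorem Em_points_linearIndependent_rank_ge_three
    (m : ℤ) (hm : 1 < m) (hodd : Odd m) (h3 : (3 : ℤ) ∣ m)
    (hP : (Em m).toAffine.Nonsingular 0 ((m : ℚ) ^ 3))
    (hQ : (Em m).toAffine.Nonsingular (-1) ((m : ℚ) ^ 3))
    (hR : (Em m).toAffine.Nonsingular (-(m : ℚ) ^ 2) (m : ℚ)) :
    LinearIndependent ℤ
      ![WeierstrassCurve.Affine.Point.some _ _ hP,
        WeierstrassCurve.Affine.Point.some _ _ hQ,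
        WeierstrassCurve.Affine.Point.some _ _ hR] ∧
      3 ≤ Module.rank ℤ (Em m).toAffine.Point := by
  haveI : Fact (Irreducible (fpol m)) := ⟨fpol_irred m hodd⟩
  have key : ∀ a b c : ℤ,
      a • WeierstrassCurve.Affine.Point.some _ _ hP + b • WeierstrassCurve.Affine.Point.some _ _ hQ
        + c • WeierstrassCurve.Affine.Point.some _ _ hR = 0 → a = 0 ∧ b = 0 ∧ c = 0 := by
    intro a b c h
    exact EmAux.relations_trivial m hm hodd h3 hP hQ hR
      (a.natAbs + b.natAbs + c.natAbs) a b c le_rfl h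
  have li : LinearIndependent ℤ
      ![WeierstrassCurve.Affine.Point.some _ _ hP,
        WeierstrassCurve.Affine.Point.some _ _ hQ,
        WeierstrassCurve.Affine.Point.some _ _ hR] := by
    rw [Fintype.linearIndependent_iff]
    intro g hg
    rw [Fin.sum_univ_three] at hg
    simp only [Matrix.cons_val_zero, Matrix.cons_val_one, Matrix.head_cons,
      Matrix.cons_val_two, Matrix.tail_cons] at hg
    obtain ⟨h0, h1, h2⟩ := key _ _ _ hg
    intro i
    fin_cases i
    · exact h0
    · exact h1
    · exact h2
  refine ⟨li, ?_⟩
  have hle := li.cardinal_le_rank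
  rwa [Cardinal.mk_fin] at hle
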